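/- For every real number n ≥ 1, ∫_{1}^{∞} e^{4π√(nμ) − √3·π·μ} dμ ≤ (4√n / 3^{3/4}) · e^{4πn/√3} + e^{4π√n − √3·π} / (√3·π). -/

import Mathlib

open Real MeasureTheory Set

theorem stmt2 (n : ℝ) (hn : 1 ≤ n) :
    (∫ μ in Set.Ici (1 : ℝ), Real.exp (4 * π * Real.sqrt (n * μ) - Real.sqrt 3 * π * μ)) ≤
      4 * Real.sqrt n / (3 : ℝ) ^ ((3 : ℝ) / 4) * Real.exp (4 * π * n / Real.sqrt 3) +
        Real.exp (4 * π * Real.sqrt n - Real.sqrt 3 * π) / (Real.sqrt 3 * π) := by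
  have hs3 : (0:ℝ) < Real.sqrt 3 := Real.sqrt_pos.2 (by norm_num)
  have h3 : Real.sqrt 3 ^ 2 = 3 := Real.sq_sqrt (by norm_num)
  set a : ℝ := Real.sqrt 3 * π with ha_def
  have ha : 0 < a := mul_pos hs3 pi_pos
  have hn0 : (0:ℝ) ≤ n := le_trans zero_le_one hn
  have hsn2 : Real.sqrt n ^ 2 = n := Real.sq_sqrt hn0
  have hsn1 : 1 ≤ Real.sqrt n := by
    rw [show (1:ℝ) = Real.sqrt 1 from Real.sqrt_one.symm]
    exact Real.sqrt_le_sqrt hn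
  set c : ℝ := 2 * Real.sqrt n / Real.sqrt 3 with hc_def
  have hc1 : 1 ≤ c := by
    rw [hc_def, le_div_iff₀ hs3]
    nlinarith [h3, hs3, hsn1]
  set M : ℝ := 4 * π * n / Real.sqrt 3 with hM_def
  have hac : 2 * a * c = 4 * π * Real.sqrt n := by
    rw [ha_def, hc_def]; field_simp; ring
  have hM : M = a * c ^ 2 := by
    rw [hM_def, ha_def, hc_def]
    field_simp
    linear_combination (-4)*hsn2
  have key : ∀ t : ℝ, 0 ≤ t →
      4 * π * Real.sqrt (n * t ^ 2) - a * t ^ 2 = M - a * (t - c) ^ 2 := by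
    intro t ht
    have h1 : Real.sqrt (n * t ^ 2) = Real.sqrt n * t := by
      rw [Real.sqrt_mul hn0, Real.sqrt_sq ht]
    rw [h1, hM]
    nlinarith [hac]
  -- substitution μ = t^2
  have himg : (fun t : ℝ => t ^ 2) '' (Ici 1) = Ici 1 := by
    ext x
    constructor
    · rintro ⟨t, ht, rfl⟩
      exact one_le_pow_iff_of_nonneg (le_trans zero_le_one ht) (by norm_num : (2:ℕ) ≠ 0) |>.2 (show (1:ℝ) ≤ t from ht)
    · intro hx
      exact ⟨Real.sqrt x, by
        rw [show (1:ℝ) = Real.sqrt 1 from Real.sqrt_one.symm]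
        exact Real.sqrt_le_sqrt hx, Real.sq_sqrt (le_trans zero_le_one hx)⟩
  have hderiv : ∀ t ∈ Ici (1:ℝ), HasDerivWithinAt (fun t : ℝ => t ^ 2) (2 * t) (Ici 1) t := by
    intro t _
    simpa using (hasDerivAt_pow 2 t).hasDerivWithinAt
  have hinj : InjOn (fun t : ℝ => t ^ 2) (Ici 1) := by
    intro x hx y hy h
    have hx0 : (0:ℝ) ≤ x := le_trans zero_le_one hx
    have hy0 : (0:ℝ) ≤ y := le_trans zero_le_one hy
    simp only at h
    nlinarith [sq_nonneg (x - y), sq_nonneg (x + y)]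
  have heq : (∫ μ in Set.Ici (1 : ℝ),
        Real.exp (4 * π * Real.sqrt (n * μ) - Real.sqrt 3 * π * μ)) =
      ∫ t in Ici (1:ℝ), |2 * t| • Real.exp (4 * π * Real.sqrt (n * t ^ 2) - a * t ^ 2) := by
    conv_lhs => rw [← himg]
    exact integral_image_eq_integral_abs_deriv_smul measurableSet_Ici hderiv hinj _
  -- rewrite integrand
  have hpt : ∀ t ∈ Ici (1:ℝ),
      |2 * t| • Real.exp (4 * π * Real.sqrt (n * t ^ 2) - a * t ^ 2) =
      Real.exp M * (2 * ((t - c) * Real.exp (-a * (t - c) ^ 2))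
        + 2 * c * Real.exp (-a * (t - c) ^ 2)) := by
    intro t ht
    have ht0 : (0:ℝ) ≤ t := le_trans zero_le_one ht
    rw [key t ht0, smul_eq_mul, abs_of_nonneg (by linarith : (0:ℝ) ≤ 2 * t),
      show M - a * (t - c) ^ 2 = M + (-a * (t - c) ^ 2) by ring, Real.exp_add]
    ring
  have int1 : IntegrableOn (fun t : ℝ => (t - c) * Real.exp (-a * (t - c) ^ 2)) (Ici 1) :=
    ((integrable_mul_exp_neg_mul_sq ha).comp_sub_right c).integrableOn
  have int2 : IntegrableOn (fun t : ℝ => Real.exp (-a * (t - c) ^ 2)) (Ici 1) :=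
    ((integrable_exp_neg_mul_sq ha).comp_sub_right c).integrableOn
  have heq2 : (∫ t in Ici (1:ℝ),
        |2 * t| • Real.exp (4 * π * Real.sqrt (n * t ^ 2) - a * t ^ 2)) =
      Real.exp M * (2 * (∫ t in Ici (1:ℝ), (t - c) * Real.exp (-a * (t - c) ^ 2))
        + 2 * c * (∫ t in Ici (1:ℝ), Real.exp (-a * (t - c) ^ 2))) := by
    rw [setIntegral_congr_fun measurableSet_Ici hpt, integral_const_mul, integral_add
      ((int1.const_mul 2)) ((int2.const_mul (2*c))), integral_const_mul, integral_const_mul]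
  -- compute I1
  have hI1 : (∫ t in Ici (1:ℝ), (t - c) * Real.exp (-a * (t - c) ^ 2)) =
      Real.exp (-a * (1 - c) ^ 2) / (2 * a) := by
    rw [integral_Ici_eq_integral_Ioi]
    have hder : ∀ t ∈ Ioi (1:ℝ),
        HasDerivAt (fun t : ℝ => -Real.exp (-a * (t - c) ^ 2) / (2 * a))
          ((t - c) * Real.exp (-a * (t - c) ^ 2)) t := by
      intro t _
      have h1 : HasDerivAt (fun t : ℝ => -a * (t - c) ^ 2) (-a * (2 * (t - c))) t := by
        have := ((hasDerivAt_id t).sub_const c).pow 2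
        simpa using this.const_mul (-a)
      have h2 := (h1.exp).div_const (2 * a)
      have h3 := h2.neg
      have e1 : (fun t : ℝ => -Real.exp (-a * (t - c) ^ 2) / (2 * a)) =
          -fun x => Real.exp (-a * (x - c) ^ 2) / (2 * a) := by
        ext x; rw [Pi.neg_apply]; ring
      rw [e1]
      refine h3.congr_deriv ?_
      · rw [mul_div_assoc, show -a * (2 * (t - c)) / (2 * a) = -(t - c) by
          rw [div_eq_iff (mul_ne_zero two_ne_zero ha.ne')]; ring]; ring
    have htend : Filter.Tendsto (fun t : ℝ => -Real.exp (-a * (t - c) ^ 2) / (2 * a))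
        Filter.atTop (nhds 0) := by
      have hsq : Filter.Tendsto (fun t : ℝ => (t - c) ^ 2) Filter.atTop Filter.atTop := by
        have := (Filter.tendsto_pow_atTop (two_ne_zero)).comp
          (Filter.tendsto_atTop_add_const_right Filter.atTop (-c) Filter.tendsto_id)
        simpa [sub_eq_add_neg, Function.comp_def] using this
      have h1 : Filter.Tendsto (fun t : ℝ => -a * (t - c) ^ 2) Filter.atTop Filter.atBot :=
        hsq.const_mul_atTop_of_neg (neg_lt_zero.2 ha)
      have h2 := ((Real.tendsto_exp_atBot.comp h1).neg).div_const (2 * a)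
      simpa [Function.comp] using h2
    rw [integral_Ioi_of_hasDerivAt_of_tendsto
      (Continuous.continuousWithinAt (by fun_prop)) hder
      (int1.mono_set Ioi_subset_Ici_self) htend]
    ring
  -- bound I2
  have hI2 : (∫ t in Ici (1:ℝ), Real.exp (-a * (t - c) ^ 2)) ≤ Real.sqrt (π / a) := by
    have hfull : (∫ t : ℝ, Real.exp (-a * (t - c) ^ 2)) = Real.sqrt (π / a) := by
      rw [show (fun t : ℝ => Real.exp (-a * (t - c) ^ 2)) =
        (fun s : ℝ => Real.exp (-a * s ^ 2)) ∘ (fun t : ℝ => t - c) from rfl]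
      rw [show (∫ t : ℝ, ((fun s : ℝ => Real.exp (-a * s ^ 2)) ∘ (fun t : ℝ => t - c)) t) =
        ∫ s : ℝ, Real.exp (-a * s ^ 2) from
          integral_sub_right_eq_self (fun s : ℝ => Real.exp (-a * s ^ 2)) c]
      exact integral_gaussian a
    calc (∫ t in Ici (1:ℝ), Real.exp (-a * (t - c) ^ 2))
        ≤ ∫ t : ℝ, Real.exp (-a * (t - c) ^ 2) :=
          setIntegral_le_integral ((integrable_exp_neg_mul_sq ha).comp_sub_right c)
            (Filter.Eventually.of_forall fun t => (Real.exp_pos _).le)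
      _ = Real.sqrt (π / a) := hfull
  -- algebraic identities for the RHS
  have hss3 : (0:ℝ) < Real.sqrt (Real.sqrt 3) := Real.sqrt_pos.2 hs3
  have h34 : ((3:ℝ) ^ ((3:ℝ)/4)) = Real.sqrt 3 * Real.sqrt (Real.sqrt 3) := by
    rw [show (3:ℝ)/4 = 1/2 + 1/4 by norm_num, Real.rpow_add (by norm_num : (0:ℝ) < 3)]
    rw [show ((3:ℝ) ^ ((1:ℝ)/2)) = Real.sqrt 3 from (Real.sqrt_eq_rpow 3).symm]
    congr 1
    rw [show (1:ℝ)/4 = (1/2)*(1/2) by norm_num,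
      Real.rpow_mul (by norm_num : (0:ℝ) ≤ 3)]
    rw [show ((3:ℝ) ^ ((1:ℝ)/2)) = Real.sqrt 3 from (Real.sqrt_eq_rpow 3).symm]
    exact (Real.sqrt_eq_rpow _).symm
  have hpa : Real.sqrt (π / a) = 1 / Real.sqrt (Real.sqrt 3) := by
    rw [ha_def, show π / (Real.sqrt 3 * π) = (Real.sqrt 3)⁻¹ by
      field_simp]
    rw [Real.sqrt_inv, inv_eq_one_div]
  have hterm1 : Real.exp M * (2 * c * Real.sqrt (π / a)) =
      4 * Real.sqrt n / (3:ℝ) ^ ((3:ℝ)/4) * Real.exp (4 * π * n / Real.sqrt 3) := by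
    rw [hpa, h34, hc_def, hM_def]
    field_simp
    ring
  have hterm2 : Real.exp M * (2 * (Real.exp (-a * (1 - c) ^ 2) / (2 * a))) =
      Real.exp (4 * π * Real.sqrt n - Real.sqrt 3 * π) / (Real.sqrt 3 * π) := by
    have hk := key 1 zero_le_one
    have h1 : Real.sqrt (n * 1 ^ 2) = Real.sqrt n := by norm_num
    rw [h1] at hk
    have : Real.exp M * Real.exp (-a * (1 - c) ^ 2) =
        Real.exp (4 * π * Real.sqrt n - Real.sqrt 3 * π) := by
      rw [← Real.exp_add]
      congr 1
      have : 4 * π * Real.sqrt n - a * 1 ^ 2 = M - a * (1 - c) ^ 2 := hk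
      rw [ha_def] at this ⊢
      linarith
    rw [show Real.exp M * (2 * (Real.exp (-a * (1 - c) ^ 2) / (2 * a))) =
      Real.exp M * Real.exp (-a * (1 - c) ^ 2) / a by field_simp, this, ha_def]
  -- put it together
  rw [heq, heq2, hI1]
  have hexpM : (0:ℝ) < Real.exp M := Real.exp_pos M
  calc Real.exp M * (2 * (Real.exp (-a * (1 - c) ^ 2) / (2 * a))
          + 2 * c * (∫ t in Ici (1:ℝ), Real.exp (-a * (t - c) ^ 2)))
      = Real.exp M * (2 * c * (∫ t in Ici (1:ℝ), Real.exp (-a * (t - c) ^ 2)))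
        + Real.exp M * (2 * (Real.exp (-a * (1 - c) ^ 2) / (2 * a))) := by ring
    _ ≤ Real.exp M * (2 * c * Real.sqrt (π / a))
        + Real.exp M * (2 * (Real.exp (-a * (1 - c) ^ 2) / (2 * a))) := by
        have hc0 : (0:ℝ) ≤ 2 * c := by linarith
        gcongr
    _ = 4 * Real.sqrt n / (3:ℝ) ^ ((3:ℝ)/4) * Real.exp (4 * π * n / Real.sqrt 3) +
        Real.exp (4 * π * Real.sqrt n - Real.sqrt 3 * π) / (Real.sqrt 3 * π) := by
        rw [hterm1, hterm2]
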